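/- For a commutative triple T = (A,B,ε), the first secondary Hochschild cohomology HH¹(A,B,ε) is isomorphic as a k-vector space to the space of secondary derivations Der_k(T, A*), where A* = Hom_k(A, k) is viewed as a symmetric (B⊗A)-module via ((α⊗a)·φ)(x) = φ(aε(α)x). -/

import Mathlib

open TensorProduct

section

variable (k A B : Type*) [Field k] [CharZero k]
  [CommRing A] [CommRing B] [Algebra k A] [Algebra k B] (ε : B →ₐ[k] A)

/-- The secondary Hochschild 1-cocycles: the kernel of `∂¹` inside
`C̄¹ = Hom_k(A ⊗ A ⊗ B, k)`. -/
def secondaryZ1 : Submodule k (TensorProduct k (TensorProduct k A A) B →ₗ[k] k) where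
  carrier := {f | ∀ (a b c : A) (α β γ : B),
    f (((a * ε α * b) ⊗ₜ[k] c) ⊗ₜ[k] (β * γ))
      - f ((a ⊗ₜ[k] (b * ε γ * c)) ⊗ₜ[k] (α * β))
      + f (((c * ε β * a) ⊗ₜ[k] b) ⊗ₜ[k] (α * γ)) = 0}
  add_mem' := by
    intro f g hf hg a b c α β γ
    simp only [LinearMap.add_apply]
    linear_combination hf a b c α β γ + hg a b c α β γ
  zero_mem' := by intro a b c α β γ; simp
  smul_mem' := by
    intro r f hf a b c α β γ
    simp only [LinearMap.smul_apply, smul_eq_mul]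
    linear_combination r * hf a b c α β γ

/-- The secondary Hochschild 1-coboundaries: the image of `∂⁰` inside
`C̄¹ = Hom_k(A ⊗ A ⊗ B, k)`. -/
def secondaryB1 : Submodule k (TensorProduct k (TensorProduct k A A) B →ₗ[k] k) where
  carrier := {g | ∃ f : A →ₗ[k] k, ∀ (a b : A) (α : B),
    g ((a ⊗ₜ[k] b) ⊗ₜ[k] α) = f (a * ε α * b) - f (b * ε α * a)}
  add_mem' := by
    rintro g₁ g₂ ⟨f₁, h₁⟩ ⟨f₂, h₂⟩
    refine ⟨f₁ + f₂, fun a b α => ?_⟩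
    simp only [LinearMap.add_apply, h₁ a b α, h₂ a b α]
    ring
  zero_mem' := ⟨0, by simp⟩
  smul_mem' := by
    rintro r g ⟨f, h⟩
    refine ⟨r • f, fun a b α => ?_⟩
    simp only [LinearMap.smul_apply, h a b α, smul_eq_mul]
    ring

/-- The secondary derivations `D : B ⊗ A → A*`, where `A* = Hom_k(A,k)` carries the
symmetric `B ⊗ A`-module structure `((α⊗a)·φ)(x) = φ(aε(α)x)`. -/
def secondaryDer : Submodule k (TensorProduct k B A →ₗ[k] (A →ₗ[k] k)) where
  carrier := {D |
    (∀ (α β : B) (a b x : A),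
      D ((α ⊗ₜ[k] a) * (β ⊗ₜ[k] b)) x =
        D (β ⊗ₜ[k] b) (a * ε α * x) + D (α ⊗ₜ[k] a) (b * ε β * x)) ∧
    (∀ (α : B) (x : A),
      D (α ⊗ₜ[k] (1 : A)) x + D (α ⊗ₜ[k] (1 : A)) x = D ((1 : B) ⊗ₜ[k] ε α) x)}
  add_mem' := by
    rintro D₁ D₂ ⟨hL₁, hT₁⟩ ⟨hL₂, hT₂⟩
    constructor
    · intro α β a b x
      simp only [LinearMap.add_apply]
      linear_combination hL₁ α β a b x + hL₂ α β a b x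
    · intro α x
      simp only [LinearMap.add_apply]
      linear_combination hT₁ α x + hT₂ α x
  zero_mem' := by constructor <;> intros <;> simp
  smul_mem' := by
    rintro r D ⟨hL, hT⟩
    constructor
    · intro α β a b x
      simp only [LinearMap.smul_apply, smul_eq_mul]
      linear_combination r * hL α β a b x
    · intro α x
      simp only [LinearMap.smul_apply, smul_eq_mul]
      linear_combination r * hT α x

/-- Since `A` is commutative, every secondary 1-coboundary vanishes. -/
lemma secondaryB1_eq_bot : secondaryB1 k A B ε = ⊥ := by
  refine le_antisymm ?_ bot_le
  rintro g ⟨f, h⟩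
  have hg : ∀ (x : TensorProduct k A A) (α : B), g (x ⊗ₜ[k] α) = 0 := by
    intro x α
    induction x using TensorProduct.induction_on with
    | zero => simp
    | tmul a b =>
        rw [h a b α]
        have : a * ε α * b = b * ε α * a := by ring
        rw [this, sub_self]
    | add y z hy hz => rw [TensorProduct.add_tmul, map_add, hy, hz, add_zero]
  have : g = 0 := by
    apply LinearMap.ext
    intro t
    induction t using TensorProduct.induction_on with
    | zero => simp
    | tmul x α => simpa using hg x α
    | add y z hy hz => simp [map_add, hy, hz]
  simp [this]

/-- The shuffle `(x ⊗ a) ⊗ α ↦ (α ⊗ a) ⊗ x`. -/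
noncomputable def shuffleT : (TensorProduct k (TensorProduct k A A) B) ≃ₗ[k]
    (TensorProduct k (TensorProduct k B A) A) :=
  (TensorProduct.comm k (TensorProduct k A A) B).trans
    ((TensorProduct.congr (LinearEquiv.refl k B) (TensorProduct.comm k A A)).trans
      ((TensorProduct.assoc k B A A).symm))

lemma shuffleT_tmul (x a : A) (α : B) :
    shuffleT k A B ((x ⊗ₜ[k] a) ⊗ₜ[k] α) = (α ⊗ₜ[k] a) ⊗ₜ[k] x := by
  simp [shuffleT]

/-- The equivalence between the ambient spaces. -/
noncomputable def PhiT : ((TensorProduct k (TensorProduct k A A) B) →ₗ[k] k) ≃ₗ[k]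
    (TensorProduct k B A →ₗ[k] (A →ₗ[k] k)) :=
  ((shuffleT k A B).arrowCongr (LinearEquiv.refl k k)).trans
    (TensorProduct.lift.equiv (RingHom.id k) (TensorProduct k B A) A k).symm

lemma PhiT_apply (f : (TensorProduct k (TensorProduct k A A) B) →ₗ[k] k) (α : B) (a x : A) :
    PhiT k A B f (α ⊗ₜ[k] a) x = f ((x ⊗ₜ[k] a) ⊗ₜ[k] α) := by
  have hs : (shuffleT k A B).symm ((α ⊗ₜ[k] a) ⊗ₜ[k] x) = (x ⊗ₜ[k] a) ⊗ₜ[k] α := by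
    rw [LinearEquiv.symm_apply_eq, shuffleT_tmul]
  simp [PhiT, TensorProduct.lift.equiv_symm_apply, LinearEquiv.arrowCongr, hs]

lemma mem_Z1_iff_PhiT_mem_der (f : (TensorProduct k (TensorProduct k A A) B) →ₗ[k] k) :
    f ∈ secondaryZ1 k A B ε ↔ PhiT k A B f ∈ secondaryDer k A B ε := by
  constructor
  · intro hf
    constructor
    · intro α β a b x
      rw [Algebra.TensorProduct.tmul_mul_tmul]
      simp only [PhiT_apply]
      have h := hf x a b α β 1
      simp only [map_one, mul_one, one_mul] at h
      linear_combination (norm := ring_nf) -h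
    · intro α x
      simp only [PhiT_apply]
      have h := hf x 1 1 1 1 α
      simp only [map_one, mul_one, one_mul] at h
      linear_combination (norm := ring_nf) h
  · rintro ⟨hL, hT⟩
    have hL' : ∀ (α β : B) (a b x : A),
        f ((x ⊗ₜ[k] (a * b)) ⊗ₜ[k] (α * β)) =
          f (((a * ε α * x) ⊗ₜ[k] b) ⊗ₜ[k] β) + f (((b * ε β * x) ⊗ₜ[k] a) ⊗ₜ[k] α) := by
      intro α β a b x
      have := hL α β a b x
      rw [Algebra.TensorProduct.tmul_mul_tmul] at this
      simpa only [PhiT_apply] using this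
    have hT' : ∀ (α : B) (x : A),
        f ((x ⊗ₜ[k] (1 : A)) ⊗ₜ[k] α) + f ((x ⊗ₜ[k] (1 : A)) ⊗ₜ[k] α) =
          f ((x ⊗ₜ[k] ε α) ⊗ₜ[k] (1 : B)) := by
      intro α x
      simpa only [PhiT_apply] using hT α x
    intro a b c α β γ
    have E1 := hL' β γ c 1 (a * ε α * b)
    have E2 := hL' α β b (ε γ * c) a
    have E3 := hL' α γ b 1 (c * ε β * a)
    have E4 := hL' 1 β (ε γ) c (b * ε α * a)
    have E5 := hT' γ (c * ε β * a * ε α * b)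
    simp only [map_one, mul_one, one_mul] at E1 E2 E3 E4 E5
    linear_combination (norm := ring_nf) E1 - E2 + E3 - E4 + E5

lemma map_PhiT_Z1 :
    (secondaryZ1 k A B ε).map (PhiT k A B : _ →ₗ[k] _) = secondaryDer k A B ε := by
  refine le_antisymm ?_ ?_
  · rintro D ⟨f, hf, rfl⟩
    exact (mem_Z1_iff_PhiT_mem_der k A B ε f).mp hf
  · intro D hD
    refine ⟨(PhiT k A B).symm D, (mem_Z1_iff_PhiT_mem_der k A B ε _).mpr ?_,
      (PhiT k A B).apply_symm_apply D⟩
    rw [(PhiT k A B).apply_symm_apply]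
    exact hD

/-- For a commutative triple `(A,B,ε)`, the first secondary Hochschild
cohomology `HH¹(A,B,ε) = Ker ∂¹ / Im ∂⁰` is isomorphic, as a `k`-vector space, to the
space of secondary derivations `Der_k(T, A*)`. -/
theorem secondary_HH1_iso_secondary_derivations :
    Nonempty
      ((@HasQuotient.Quotient (secondaryZ1 k A B ε) _ (Submodule.hasQuotient (R := k))
          (Submodule.comap (secondaryZ1 k A B ε).subtype (secondaryB1 k A B ε)))
        ≃ₗ[k] secondaryDer k A B ε) := by
  have hb : Submodule.comap (secondaryZ1 k A B ε).subtype (secondaryB1 k A B ε) = ⊥ := by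
    rw [secondaryB1_eq_bot, Submodule.comap_bot, Submodule.ker_subtype]
  exact ⟨(Submodule.quotEquivOfEqBot _ hb).trans
    (LinearEquiv.ofSubmodules (PhiT k A B) _ _ (map_PhiT_Z1 k A B ε))⟩

end
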